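/- For the linear time-varying system ẋ = −Γ Λ(t)^T Λ(t) x with Γ symmetric positive definite, the quadratic function V(x,t) = x^T P(t) x with P(t) = (T/2)Γ^{-1} + ∫_{t-T}^{t}(s−t+T)Φ(s,t)^T Λ(s)^T Λ(s)Φ(s,t) ds has time derivative along trajectories equal to V̇ = −x^T M(t) x, where M(t) = ∫_{t-T}^{t} Φ(s,t)^T Λ(s)^T Λ(s) Φ(s,t) ds is the observability Gramian. In particular, if M(t) ≥ ι̲₃ I then V̇ ≤ −ι̲₃ ‖x‖². -/

import Mathlib

open Matrix

private lemma cont_entry_mul {a : Type*} {b : Type*} {c : Type*} [Fintype b]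
    (A : ℝ → Matrix a b ℝ) (B : ℝ → Matrix b c ℝ)
    (hA : ∀ i j, Continuous fun s => A s i j) (hB : ∀ i j, Continuous fun s => B s i j) :
    ∀ i j, Continuous fun s => (A s * B s) i j := by
  intro i j
  simp only [Matrix.mul_apply]
  exact continuous_finset_sum _ fun k _ => (hA i k).mul (hB k j)

private lemma dot_quad {m : ℕ} (A : Matrix (Fin m) (Fin m) ℝ) (u v : Fin m → ℝ) :
    u ⬝ᵥ A *ᵥ v = ∑ i, ∑ j, u i * (A i j * v j) := by
  simp [dotProduct, Matrix.mulVec, Finset.mul_sum]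

private lemma dot_integral {m : ℕ} (N : Matrix (Fin m) (Fin m) ℝ)
    (g : ℝ → Matrix (Fin m) (Fin m) ℝ) (a b : ℝ)
    (hcont : ∀ i j, Continuous fun s => g s i j)
    (hN : ∀ i j, N i j = ∫ s in a..b, g s i j) (v : Fin m → ℝ) :
    v ⬝ᵥ N *ᵥ v = ∫ s in a..b, v ⬝ᵥ (g s) *ᵥ v := by
  have key : ∀ i j, v i * (N i j * v j) = ∫ s in a..b, v i * (g s i j * v j) := by
    intro i j
    rw [hN, intervalIntegral.integral_const_mul, intervalIntegral.integral_mul_const]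
  rw [dot_quad]
  have : ∀ s, v ⬝ᵥ (g s) *ᵥ v = ∑ i, ∑ j, v i * (g s i j * v j) := fun s => dot_quad _ _ _
  simp only [this]
  rw [intervalIntegral.integral_finset_sum (fun i _ =>
      (Continuous.intervalIntegrable (by
        exact continuous_finset_sum _ fun j _ =>
          continuous_const.mul ((hcont i j).mul continuous_const)) a b))]
  refine Finset.sum_congr rfl fun i _ => ?_
  rw [intervalIntegral.integral_finset_sum (fun j _ =>
      (Continuous.intervalIntegrable
        (show Continuous fun s => v i * (g s i j * v j) from
          continuous_const.mul ((hcont i j).mul continuous_const)) a b))]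
  exact Finset.sum_congr rfl fun j _ => key i j

private lemma quad_split {p m : ℕ} (A : Matrix (Fin p) (Fin m) ℝ)
    (C : Matrix (Fin m) (Fin m) ℝ) (v : Fin m → ℝ) :
    v ⬝ᵥ (Cᵀ * Aᵀ * A * C) *ᵥ v = (A *ᵥ (C *ᵥ v)) ⬝ᵥ (A *ᵥ (C *ᵥ v)) := by
  rw [← Matrix.mulVec_mulVec, ← Matrix.mulVec_mulVec, ← Matrix.mulVec_mulVec,
    Matrix.dotProduct_mulVec v Cᵀ, Matrix.vecMul_transpose,
    Matrix.dotProduct_mulVec _ Aᵀ, Matrix.vecMul_transpose]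

private lemma symm_bilin {m : ℕ} (S : Matrix (Fin m) (Fin m) ℝ) (hS : Sᵀ = S)
    (u v : Fin m → ℝ) : u ⬝ᵥ S *ᵥ v = v ⬝ᵥ S *ᵥ u := by
  rw [Matrix.dotProduct_mulVec,
    show u ᵥ* S = S *ᵥ u from by rw [← hS, Matrix.vecMul_transpose, hS],
    dotProduct_comm]

private lemma flow_eq {p m : ℕ}
    (Λ : ℝ → Matrix (Fin p) (Fin m) ℝ)
    (Γ : Matrix (Fin m) (Fin m) ℝ)
    (Φ : ℝ → ℝ → Matrix (Fin m) (Fin m) ℝ)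
    (hΦdiag : ∀ t, Φ t t = 1)
    (hΦderiv : ∀ s t i j,
      HasDerivAt (fun τ => Φ s τ i j) ((Φ s t * Γ * (Λ t)ᵀ * Λ t) i j) t)
    (x : ℝ → Fin m → ℝ)
    (hx : ∀ t, HasDerivAt x (-((Γ * (Λ t)ᵀ * Λ t) *ᵥ x t)) t) :
    ∀ s t, Φ s t *ᵥ x t = x s := by
  intro s t
  have hxk : ∀ t (k : Fin m), HasDerivAt (fun τ => x τ k)
      ((-((Γ * (Λ t)ᵀ * Λ t) *ᵥ x t)) k) t := fun t k => hasDerivAt_pi.mp (hx t) k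
  have key : ∀ (i : Fin m) (τ : ℝ), HasDerivAt (fun τ => (Φ s τ *ᵥ x τ) i) 0 τ := by
    intro i τ
    have heq : (fun τ => (Φ s τ *ᵥ x τ) i) = fun τ => ∑ k, Φ s τ i k * x τ k := by
      funext τ; simp [Matrix.mulVec, dotProduct]
    rw [heq]
    have hd := HasDerivAt.fun_sum (fun k (_ : k ∈ Finset.univ) =>
      (hΦderiv s τ i k).mul (hxk τ k))
    refine hd.congr_deriv (Eq.symm ?_)
    have e1 : ∑ k, ((Φ s τ * Γ * (Λ τ)ᵀ * Λ τ) i k * x τ k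
        + Φ s τ i k * (-((Γ * (Λ τ)ᵀ * Λ τ) *ᵥ x τ)) k)
        = ((Φ s τ * Γ * (Λ τ)ᵀ * Λ τ) *ᵥ x τ) i
          + (Φ s τ *ᵥ (-((Γ * (Λ τ)ᵀ * Λ τ) *ᵥ x τ))) i := by
      rw [Finset.sum_add_distrib]; rfl
    rw [e1, Matrix.mulVec_neg, Matrix.mulVec_mulVec]
    have : Φ s τ * (Γ * (Λ τ)ᵀ * Λ τ) = Φ s τ * Γ * (Λ τ)ᵀ * Λ τ := by
      simp [Matrix.mul_assoc]
    rw [this]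
    simp
  have hcon : ∀ i : Fin m, (Φ s t *ᵥ x t) i = (Φ s s *ᵥ x s) i := by
    intro i
    exact is_const_of_deriv_eq_zero (fun τ => (key i τ).differentiableAt)
      (fun τ => (key i τ).deriv) t s
  funext i
  rw [hcon i, hΦdiag, Matrix.one_mulVec]

/-- For the LTV system `ẋ = −Γ Λ(t)ᵀΛ(t) x` with `Γ` symmetric positive definite, the
quadratic function `V(x,t) = xᵀ P(t) x` with
`P(t) = (T/2)Γ⁻¹ + ∫_{t-T}^{t}(s−t+T)Φ(s,t)ᵀΛ(s)ᵀΛ(s)Φ(s,t) ds` has time derivative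
along trajectories `V̇ = −xᵀ M(t) x` where `M(t)` is the observability Gramian; in
particular, if `M(t) ≥ ι I` then `V̇ ≤ −ι ‖x‖²`. -/
theorem lyapunov_derivative_along_trajectories {p m : ℕ}
    (Λ : ℝ → Matrix (Fin p) (Fin m) ℝ)
    (hΛcont : ∀ i j, Continuous fun s => Λ s i j)
    (Γ : Matrix (Fin m) (Fin m) ℝ) (hΓ : Γ.PosDef)
    (T : ℝ) (hT : 0 < T)
    (Φ : ℝ → ℝ → Matrix (Fin m) (Fin m) ℝ)
    (hΦdiag : ∀ t, Φ t t = 1)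
    (hΦcont : ∀ t i j, Continuous fun s => Φ s t i j)
    (hΦderiv : ∀ s t i j,
      HasDerivAt (fun τ => Φ s τ i j) ((Φ s t * Γ * (Λ t)ᵀ * Λ t) i j) t)
    (x : ℝ → Fin m → ℝ)
    (hx : ∀ t, HasDerivAt x (-((Γ * (Λ t)ᵀ * Λ t) *ᵥ x t)) t)
    (M : ℝ → Matrix (Fin m) (Fin m) ℝ)
    (hM : ∀ t i j, M t i j =
      ∫ s in (t - T)..t, ((Φ s t)ᵀ * (Λ s)ᵀ * Λ s * Φ s t) i j)
    (P : ℝ → Matrix (Fin m) (Fin m) ℝ)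
    (hP : ∀ t i j, P t i j = ((T / 2) • Γ⁻¹) i j +
      ∫ s in (t - T)..t, (s - t + T) * (((Φ s t)ᵀ * (Λ s)ᵀ * Λ s * Φ s t) i j))
    (ι : ℝ) (hι : 0 < ι)
    (hMlb : ∀ t, T ≤ t →
      (M t - ι • (1 : Matrix (Fin m) (Fin m) ℝ)).PosSemidef) :
    ∀ t : ℝ,
      HasDerivAt (fun τ => x τ ⬝ᵥ (P τ) *ᵥ x τ) (-(x t ⬝ᵥ (M t) *ᵥ x t)) t ∧
      (T ≤ t → -(x t ⬝ᵥ (M t) *ᵥ x t) ≤ -ι * (x t ⬝ᵥ x t)) := by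
  -- basic facts about Γ
  have hdet : IsUnit Γ.det := isUnit_iff_ne_zero.mpr (ne_of_gt hΓ.det_pos)
  have hΓsym : Γᵀ = Γ := by
    have := hΓ.1
    rwa [Matrix.IsHermitian, Matrix.conjTranspose_eq_transpose_of_trivial] at this
  have hΓinvsym : (Γ⁻¹)ᵀ = Γ⁻¹ := by
    rw [Matrix.transpose_nonsing_inv, hΓsym]
  -- the flow property
  have flow : ∀ s t, Φ s t *ᵥ x t = x s := flow_eq Λ Γ Φ hΦdiag hΦderiv x hx
  have hxk : ∀ t (k : Fin m), HasDerivAt (fun τ => x τ k)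
      ((-((Γ * (Λ t)ᵀ * Λ t) *ᵥ x t)) k) t := fun t k => hasDerivAt_pi.mp (hx t) k
  -- the scalar function h
  set h : ℝ → ℝ := fun s => (Λ s *ᵥ x s) ⬝ᵥ (Λ s *ᵥ x s) with hh_def
  have hxcont : ∀ k, Continuous fun τ => x τ k := fun k =>
    continuous_iff_continuousAt.mpr fun τ => (hxk τ k).continuousAt
  have hAx : ∀ i, Continuous fun s => (Λ s *ᵥ x s) i := by
    intro i
    have : (fun s => (Λ s *ᵥ x s) i) = fun s => ∑ j, Λ s i j * x s j := by
      funext s; simp [Matrix.mulVec, dotProduct]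
    rw [this]
    exact continuous_finset_sum _ fun j _ => (hΛcont i j).mul (hxcont j)
  have hh : Continuous h := by
    have : h = fun s => ∑ i, (Λ s *ᵥ x s) i * (Λ s *ᵥ x s) i := by
      funext s; simp [hh_def, dotProduct]
    rw [this]
    exact continuous_finset_sum _ fun i _ => (hAx i).mul (hAx i)
  -- continuity of the Gramian integrand entries
  have hQcont : ∀ τ (i j : Fin m),
      Continuous fun s => ((Φ s τ)ᵀ * (Λ s)ᵀ * Λ s * Φ s τ) i j := by
    intro τ
    have h1 : ∀ (i : Fin m) (j : Fin p), Continuous fun s => ((Φ s τ)ᵀ * (Λ s)ᵀ) i j :=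
      cont_entry_mul (fun s => (Φ s τ)ᵀ) (fun s => (Λ s)ᵀ)
        (fun i j => hΦcont τ j i) (fun i j => hΛcont j i)
    have h2 : ∀ (i j : Fin m), Continuous fun s => ((Φ s τ)ᵀ * (Λ s)ᵀ * Λ s) i j :=
      cont_entry_mul _ _ h1 hΛcont
    exact cont_entry_mul _ _ h2 (fun i j => hΦcont τ i j)
  -- quadratic form identity
  have hq : ∀ s τ, x τ ⬝ᵥ ((Φ s τ)ᵀ * (Λ s)ᵀ * Λ s * Φ s τ) *ᵥ x τ = h s := by
    intro s τ
    rw [quad_split, flow s τ]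
  -- integrability
  have hint2 : ∀ a b : ℝ, IntervalIntegrable h MeasureTheory.volume a b :=
    fun a b => hh.intervalIntegrable a b
  have hint1 : ∀ a b : ℝ, IntervalIntegrable (fun s => s * h s) MeasureTheory.volume a b :=
    fun a b => (continuous_id.mul hh).intervalIntegrable a b
  set H : ℝ → ℝ := fun u => ∫ s in (0:ℝ)..u, h s with hH_def
  set G : ℝ → ℝ := fun u => ∫ s in (0:ℝ)..u, s * h s with hG_def
  have hHsub : ∀ τ : ℝ, ∫ s in (τ - T)..τ, h s = H τ - H (τ - T) := fun τ =>
    (intervalIntegral.integral_interval_sub_left (hint2 0 τ) (hint2 0 (τ - T))).symm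
  have hGsub : ∀ τ : ℝ, ∫ s in (τ - T)..τ, s * h s = G τ - G (τ - T) := fun τ =>
    (intervalIntegral.integral_interval_sub_left (hint1 0 τ) (hint1 0 (τ - T))).symm
  -- value of x M x
  have hMval : ∀ τ, x τ ⬝ᵥ M τ *ᵥ x τ = H τ - H (τ - T) := by
    intro τ
    rw [dot_integral (M τ) (fun s => (Φ s τ)ᵀ * (Λ s)ᵀ * Λ s * Φ s τ) _ _
      (hQcont τ) (hM τ) (x τ)]
    rw [← hHsub τ]
    exact intervalIntegral.integral_congr fun s _ => hq s τ
  -- the expansion of V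
  have hVeq : ∀ τ, x τ ⬝ᵥ P τ *ᵥ x τ =
      (T / 2) * (x τ ⬝ᵥ Γ⁻¹ *ᵥ x τ)
        + (G τ - G (τ - T) + (T - τ) * (H τ - H (τ - T))) := by
    intro τ
    have hPsplit : P τ = (T / 2) • Γ⁻¹
        + Matrix.of (fun i j => ∫ s in (τ - T)..τ,
            (s - τ + T) * (((Φ s τ)ᵀ * (Λ s)ᵀ * Λ s * Φ s τ) i j)) := by
      ext i j
      rw [hP τ i j]
      rfl
    rw [hPsplit, Matrix.add_mulVec, dotProduct_add, Matrix.smul_mulVec,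
      dotProduct_smul, smul_eq_mul]
    congr 1
    have hgcont : ∀ (i j : Fin m), Continuous fun s =>
        ((s - τ + T) • ((Φ s τ)ᵀ * (Λ s)ᵀ * Λ s * Φ s τ)) i j := by
      intro i j
      simp only [Matrix.smul_apply, smul_eq_mul]
      exact (((continuous_id.sub continuous_const).add continuous_const).mul (hQcont τ i j))
    have e := dot_integral
      (Matrix.of (fun i j => ∫ s in (τ - T)..τ,
        (s - τ + T) * (((Φ s τ)ᵀ * (Λ s)ᵀ * Λ s * Φ s τ) i j)))
      (fun s => (s - τ + T) • ((Φ s τ)ᵀ * (Λ s)ᵀ * Λ s * Φ s τ)) (τ - T) τ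
      hgcont (fun i j => rfl) (x τ)
    rw [e]
    have hgq : ∀ s, x τ ⬝ᵥ ((s - τ + T) • ((Φ s τ)ᵀ * (Λ s)ᵀ * Λ s * Φ s τ)) *ᵥ x τ
        = s * h s + (T - τ) * h s := by
      intro s
      rw [Matrix.smul_mulVec, dotProduct_smul, smul_eq_mul, hq s τ]
      ring
    rw [intervalIntegral.integral_congr (fun s _ => hgq s),
      intervalIntegral.integral_add (hint1 _ _) ((hint2 _ _).const_mul _),
      intervalIntegral.integral_const_mul, hGsub τ, hHsub τ]
  -- derivatives of H and G
  have hHd : ∀ u : ℝ, HasDerivAt H (h u) u := fun u =>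
    intervalIntegral.integral_hasDerivAt_right (hint2 0 u)
      (hh.stronglyMeasurable.stronglyMeasurableAtFilter) hh.continuousAt
  have hGd : ∀ u : ℝ, HasDerivAt G (u * h u) u := fun u =>
    intervalIntegral.integral_hasDerivAt_right (hint1 0 u)
      ((continuous_id.mul hh).stronglyMeasurable.stronglyMeasurableAtFilter)
      (continuous_id.mul hh).continuousAt
  intro t
  constructor
  · -- the derivative claim
    set B : Matrix (Fin m) (Fin m) ℝ := Γ * (Λ t)ᵀ * Λ t with hB_def
    -- derivative of the quadratic part
    have hquadd : HasDerivAt (fun τ => x τ ⬝ᵥ Γ⁻¹ *ᵥ x τ)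
        ((-(B *ᵥ x t)) ⬝ᵥ Γ⁻¹ *ᵥ x t + x t ⬝ᵥ Γ⁻¹ *ᵥ (-(B *ᵥ x t))) t := by
      have heq : (fun τ => x τ ⬝ᵥ Γ⁻¹ *ᵥ x τ)
          = fun τ => ∑ i, ∑ j, x τ i * (Γ⁻¹ i j * x τ j) :=
        funext fun τ => dot_quad _ _ _
      rw [heq]
      have hd := HasDerivAt.fun_sum (fun i (_ : i ∈ Finset.univ) =>
        HasDerivAt.fun_sum (fun j (_ : j ∈ Finset.univ) =>
          (hxk t i).mul ((hxk t j).const_mul (Γ⁻¹ i j))))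
      refine hd.congr_deriv (Eq.symm ?_)
      rw [dot_quad, dot_quad, ← Finset.sum_add_distrib]
      refine Finset.sum_congr rfl fun i _ => ?_
      rw [← Finset.sum_add_distrib]
    have c2 : x t ⬝ᵥ Γ⁻¹ *ᵥ (-(B *ᵥ x t)) = -(h t) := by
      rw [Matrix.mulVec_neg, dotProduct_neg, neg_inj, Matrix.mulVec_mulVec]
      have e : Γ⁻¹ * B = (Λ t)ᵀ * Λ t := by
        rw [hB_def, ← Matrix.mul_assoc, ← Matrix.mul_assoc,
          Matrix.nonsing_inv_mul _ hdet, Matrix.one_mul]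
      rw [e, ← Matrix.mulVec_mulVec, Matrix.dotProduct_mulVec _ (Λ t)ᵀ,
        Matrix.vecMul_transpose]
    have c1 : (-(B *ᵥ x t)) ⬝ᵥ Γ⁻¹ *ᵥ x t = -(h t) := by
      rw [symm_bilin Γ⁻¹ hΓinvsym, c2]
    -- derivative of the integral part
    have hGc : HasDerivAt (fun τ => G (τ - T)) ((t - T) * h (t - T)) t := by
      have := (hGd (t - T)).comp t ((hasDerivAt_id t).sub_const T)
      simpa [Function.comp_def] using this
    have hHc : HasDerivAt (fun τ => H (τ - T)) (h (t - T)) t := by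
      have := (hHd (t - T)).comp t ((hasDerivAt_id t).sub_const T)
      simpa [Function.comp_def] using this
    have hpiece2 : HasDerivAt
        (fun τ => G τ - G (τ - T) + (T - τ) * (H τ - H (τ - T)))
        (t * h t - (t - T) * h (t - T)
          + ((0 - 1) * (H t - H (t - T)) + (T - t) * (h t - h (t - T)))) t :=
      ((hGd t).sub hGc).add
        (((hasDerivAt_const t T).sub (hasDerivAt_id t)).mul ((hHd t).sub hHc))
    have total := (hquadd.const_mul (T / 2)).add hpiece2
    have hfun : (fun τ => x τ ⬝ᵥ P τ *ᵥ x τ)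
        = fun τ => (T / 2) * (x τ ⬝ᵥ Γ⁻¹ *ᵥ x τ)
            + (G τ - G (τ - T) + (T - τ) * (H τ - H (τ - T))) := funext hVeq
    rw [hfun]
    refine total.congr_deriv (Eq.symm ?_)
    rw [hMval t, c1, c2]
    ring
  · -- the inequality claim
    intro ht
    have h0 := (hMlb t ht).dotProduct_mulVec_nonneg (x t)
    simp only [star_trivial] at h0
    rw [Matrix.sub_mulVec, Matrix.smul_mulVec, Matrix.one_mulVec,
      dotProduct_sub, dotProduct_smul, smul_eq_mul] at h0
    linarith
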